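/- arXiv:1104.1039 — 3 statements merged into one kernel-verified Lean document; each statement's English description precedes it below -/
import Mathlib

section
/- Let f(x₁,x₂) = 1(0 ≤ x₁√x₂ ≤ 1)·1(0 ≤ x₂√x₁ ≤ 1) on ℝ². Then f ∈ L¹(ℝ²) ∩ L²(ℝ²), but the function f₁(y) = 2·1(y ≥ 0)·min{1/y², 1/√y} = 2∫_ℝ f(y,x) dx is not in L²(ℝ). -/
open MeasureTheory Set

noncomputable section

/-- `f(x₁,x₂) = 1(0 ≤ x₁√x₂ ≤ 1)·1(0 ≤ x₂√x₁ ≤ 1)`, supported on the positive quadrant. -/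
def ffun : ℝ × ℝ → ℝ := fun p =>
  if 0 ≤ p.1 ∧ 0 ≤ p.2 ∧ p.1 * Real.sqrt p.2 ≤ 1 ∧ p.2 * Real.sqrt p.1 ≤ 1 then 1 else 0

/-- The first chaos kernel `f₁(y) = 2 ∫ f(y,x) dx`. -/
def f1fun : ℝ → ℝ := fun y => 2 * ∫ x, ffun (y, x)

def Sset : Set (ℝ × ℝ) :=
  {p | 0 ≤ p.1 ∧ 0 ≤ p.2 ∧ p.1 * Real.sqrt p.2 ≤ 1 ∧ p.2 * Real.sqrt p.1 ≤ 1}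

lemma hSmeas : MeasurableSet Sset := by
  have h1 : Measurable fun p : ℝ × ℝ => p.1 * Real.sqrt p.2 :=
    measurable_fst.mul (Real.continuous_sqrt.measurable.comp measurable_snd)
  have h2 : Measurable fun p : ℝ × ℝ => p.2 * Real.sqrt p.1 :=
    measurable_snd.mul (Real.continuous_sqrt.measurable.comp measurable_fst)
  exact (measurableSet_le measurable_const measurable_fst).inter
    ((measurableSet_le measurable_const measurable_snd).inter
      ((measurableSet_le h1 measurable_const).inter
        (measurableSet_le h2 measurable_const)))

lemma ffun_eq : ffun = Sset.indicator (fun _ => (1:ℝ)) := by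
  funext p
  by_cases h : p ∈ Sset <;> simp [ffun, Sset, Set.indicator_apply, h]

def mfun : ℝ → ℝ := fun y => min (1 / y ^ 2) (1 / Real.sqrt y)

lemma mfun_pos {y : ℝ} (hy : 0 < y) : 0 < mfun y := by
  have h1 : 0 < Real.sqrt y := Real.sqrt_pos.mpr hy
  exact lt_min (by positivity) (by positivity)

lemma slice_eq {y : ℝ} (hy : 0 < y) :
    (fun x => ffun (y, x)) = (Icc 0 (mfun y)).indicator (fun _ => (1:ℝ)) := by
  have hsy : 0 < Real.sqrt y := Real.sqrt_pos.mpr hy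
  funext x
  have hiff : (0 ≤ y ∧ 0 ≤ x ∧ y * Real.sqrt x ≤ 1 ∧ x * Real.sqrt y ≤ 1) ↔
      (0 ≤ x ∧ x ≤ mfun y) := by
    constructor
    · rintro ⟨-, hx, h1, h2⟩
      refine ⟨hx, le_min ?_ ?_⟩
      · have hsx : Real.sqrt x ≤ 1 / y := by
          rw [le_div_iff₀ hy]
          calc Real.sqrt x * y = y * Real.sqrt x := mul_comm _ _
            _ ≤ 1 := h1
        have := (Real.sqrt_le_left (by positivity)).mp hsx
        calc x ≤ (1 / y) ^ 2 := this
          _ = 1 / y ^ 2 := by rw [div_pow, one_pow]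
      · rw [← le_div_iff₀ hsy] at h2; exact h2
    · rintro ⟨hx, hm⟩
      have hm1 : x ≤ 1 / y ^ 2 := hm.trans (min_le_left _ _)
      have hm2 : x ≤ 1 / Real.sqrt y := hm.trans (min_le_right _ _)
      refine ⟨hy.le, hx, ?_, (le_div_iff₀ hsy).mp hm2⟩
      have hsx : Real.sqrt x ≤ 1 / y := by
        have : x ≤ (1/y) ^ 2 := by rw [div_pow, one_pow]; exact hm1
        exact (Real.sqrt_le_left (by positivity)).mpr this
      calc y * Real.sqrt x ≤ y * (1 / y) := mul_le_mul_of_nonneg_left hsx hy.le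
        _ = 1 := by field_simp
  by_cases h : x ∈ Icc 0 (mfun y)
  · simp only [ffun]
    rw [if_pos (hiff.mpr (mem_Icc.mp h)), Set.indicator_of_mem h]
  · simp only [ffun]
    rw [if_neg (fun hc => h (mem_Icc.mpr (hiff.mp hc))), Set.indicator_of_notMem h]

lemma slice_neg {y : ℝ} (hy : y < 0) : (fun x => ffun (y, x)) = fun _ => (0:ℝ) := by
  funext x
  simp [ffun, hy.not_ge]

lemma integral_slice {y : ℝ} (hy : 0 < y) : ∫ x, ffun (y, x) = mfun y := by
  rw [slice_eq hy, integral_indicator_const (1:ℝ) measurableSet_Icc]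
  simp [Real.volume_Icc, ENNReal.toReal_ofReal (mfun_pos hy).le, (mfun_pos hy).le]

lemma f1_eq {y : ℝ} (hy : 0 < y) : f1fun y = 2 * mfun y := by
  rw [f1fun, integral_slice hy]

lemma mfun_measurable : Measurable mfun := by
  apply Measurable.min
  · exact (measurable_const.div ((measurable_id (α := ℝ)).pow_const 2))
  · exact measurable_const.div Real.continuous_sqrt.measurable

lemma g_integrable : Integrable ((Ioi (0:ℝ)).indicator mfun) := by
  have hgm : Measurable ((Ioi (0:ℝ)).indicator mfun) :=
    mfun_measurable.indicator measurableSet_Ioi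
  have h1 : IntegrableOn ((Ioi (0:ℝ)).indicator mfun) (Iic 0) := by
    refine (integrableOn_zero).congr_fun (fun x hx => ?_) measurableSet_Iic
    simp [Set.indicator_of_notMem (by simpa using not_lt.mpr (mem_Iic.mp hx) : x ∉ Ioi (0:ℝ))]
  have h2 : IntegrableOn ((Ioi (0:ℝ)).indicator mfun) (Ioc 0 1) := by
    have hint : IntegrableOn (fun y : ℝ => y ^ (-(1/2) : ℝ)) (Ioc 0 1) := by
      have := intervalIntegral.intervalIntegrable_rpow' (a := 0) (b := 1)
        (r := -(1/2)) (by norm_num)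
      rwa [intervalIntegrable_iff, Set.uIoc_of_le zero_le_one] at this
    refine hint.mono' hgm.aestronglyMeasurable ?_
    filter_upwards [ae_restrict_mem measurableSet_Ioc] with y hy
    have h0 : (0:ℝ) < y := hy.1
    rw [Set.indicator_of_mem (mem_Ioi.mpr h0), Real.norm_of_nonneg (mfun_pos h0).le]
    have he : y ^ (-(1/2) : ℝ) = 1 / Real.sqrt y := by
      rw [Real.rpow_neg h0.le, Real.sqrt_eq_rpow]
      norm_num
    rw [he]
    exact min_le_right _ _
  have h3 : IntegrableOn ((Ioi (0:ℝ)).indicator mfun) (Ioi 1) := by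
    have hint : IntegrableOn (fun y : ℝ => y ^ (-2 : ℝ)) (Ioi 1) :=
      integrableOn_Ioi_rpow_of_lt (by norm_num) one_pos
    refine hint.mono' hgm.aestronglyMeasurable ?_
    filter_upwards [ae_restrict_mem measurableSet_Ioi] with y hy
    have h0 : (0:ℝ) < y := lt_trans one_pos (mem_Ioi.mp hy)
    rw [Set.indicator_of_mem (mem_Ioi.mpr h0), Real.norm_of_nonneg (mfun_pos h0).le]
    have he : y ^ (-2 : ℝ) = 1 / y ^ 2 := by
      rw [Real.rpow_neg h0.le, one_div]
      norm_num [Real.rpow_natCast]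
    rw [he]
    exact min_le_left _ _
  have hunion : (Iic (0:ℝ)) ∪ (Ioc 0 1 ∪ Ioi 1) = univ := by
    rw [Set.Ioc_union_Ioi_eq_Ioi zero_le_one, Set.Iic_union_Ioi]
  rw [← integrableOn_univ, ← hunion]
  exact h1.union (h2.union h3)

/-- `f ∈ L¹(ℝ²) ∩ L²(ℝ²)`, the first kernel satisfies
`f₁(y) = 2·min{1/y², 1/√y}` for `y > 0`, yet `f₁ ∉ L²(ℝ)`. -/
theorem ffun_L1_L2_but_first_kernel_not_L2 :
    Integrable ffun (volume : Measure (ℝ × ℝ)) ∧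
    MemLp ffun 2 (volume : Measure (ℝ × ℝ)) ∧
    (∀ y : ℝ, 0 < y → f1fun y = 2 * min (1 / y ^ 2) (1 / Real.sqrt y)) ∧
    ¬ MemLp f1fun 2 (volume : Measure ℝ) := by
  have hfm : Measurable ffun := by
    rw [ffun_eq]; exact measurable_const.indicator hSmeas
  have hae0 : ∀ᵐ y : ℝ, y ≠ 0 := by
    rw [ae_iff]
    simp only [not_not, Set.setOf_eq_eq_singleton]
    exact Real.volume_singleton
  -- Integrability of ffun on the product space
  have hInt : Integrable ffun (volume : Measure (ℝ × ℝ)) := by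
    rw [show (volume : Measure (ℝ × ℝ)) = (volume : Measure ℝ).prod volume from rfl]
    rw [integrable_prod_iff hfm.aestronglyMeasurable]
    constructor
    · filter_upwards [hae0] with y hy
      rcases lt_or_gt_of_ne hy with h | h
      · rw [slice_neg h]; exact integrable_zero _ _ _
      · rw [slice_eq h]
        exact (integrable_indicator_iff measurableSet_Icc).mpr
          (integrableOn_const measure_Icc_lt_top.ne)
    · apply (g_integrable).congr
      filter_upwards [hae0] with y hy
      have hnorm : (fun x => ‖ffun (y, x)‖) = fun x => ffun (y, x) := by
        funext x
        apply Real.norm_of_nonneg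
        unfold ffun; split <;> norm_num
      rcases lt_or_gt_of_ne hy with h | h
      · rw [Set.indicator_of_notMem (by simpa using h.le : y ∉ Ioi (0:ℝ)), hnorm, slice_neg h]
        simp
      · rw [Set.indicator_of_mem (mem_Ioi.mpr h), hnorm]
        exact (integral_slice h).symm
  refine ⟨hInt, ?_, ?_, ?_⟩
  · -- Memℒp 2
    have hμS : volume Sset ≠ ⊤ := by
      have hfin : (∫⁻ a, (‖ffun a‖₊ : ENNReal)) < ⊤ := hInt.hasFiniteIntegral
      have heq : ∫⁻ a, (‖ffun a‖₊ : ENNReal) = volume Sset := by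
        rw [← lintegral_indicator_one hSmeas]
        apply lintegral_congr
        intro a
        by_cases h : a ∈ Sset
        · rw [ffun_eq, Set.indicator_of_mem h, Set.indicator_of_mem h]
          norm_num
        · rw [ffun_eq, Set.indicator_of_notMem h, Set.indicator_of_notMem h]
          norm_num
      rw [heq] at hfin
      exact hfin.ne
    rw [ffun_eq]
    exact memLp_indicator_const 2 hSmeas 1 (Or.inr hμS)
  · intro y hy
    exact f1_eq hy
  · intro h
    have hsq := h.integrable_sq
    have h1 : IntegrableOn (fun y => f1fun y ^ 2) (Ioo 0 1) := hsq.integrableOn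
    have h2 : IntegrableOn (fun y : ℝ => (1/4) * f1fun y ^ 2) (Ioo 0 1) := h1.const_mul _
    have h3 : IntegrableOn (fun y : ℝ => y ^ (-1 : ℝ)) (Ioo 0 1) := by
      refine h2.congr_fun (fun y hy => ?_) measurableSet_Ioo
      obtain ⟨hy0, hy1⟩ := hy
      have hsy : 0 < Real.sqrt y := Real.sqrt_pos.mpr hy0
      have hmin : mfun y = 1 / Real.sqrt y := by
        apply min_eq_right
        apply one_div_le_one_div_of_le (by positivity)
        -- y ^ 2 ≤ √y
        have hy' : y ≤ Real.sqrt y := (Real.le_sqrt hy0.le hy0.le).mpr (by nlinarith)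
        nlinarith [Real.sq_sqrt hy0.le, Real.sqrt_nonneg y]
      have hf1 : f1fun y = 2 / Real.sqrt y := by
        rw [f1_eq hy0, hmin]; ring
      beta_reduce
      rw [hf1, Real.rpow_neg_one]
      rw [div_pow]
      have h4 : Real.sqrt y ^ 2 = y := Real.sq_sqrt hy0.le
      rw [h4]
      field_simp
      norm_num
    have := (intervalIntegral.integrableOn_Ioo_rpow_iff (s := (-1:ℝ)) zero_lt_one).mp h3
    linarith

end
end

section
/- For the random variable F = L(L−1) + R(R−1) − 2LR with L, R independent Poisson(λ), the normalized third moment E[((F − E F)/√(Var F))³] = 64λ³/(8λ²)^{3/2} = 2√2 does not tend to 0 as λ → ∞; in particular the skewness is a constant 2√2 for all λ > 0. -/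
open MeasureTheory ProbabilityTheory

noncomputable section

lemma descCast (k n : ℕ) :
    (n.descFactorial k : ℝ) = ∏ i ∈ Finset.range k, ((n : ℝ) - i) := by
  induction k with
  | zero => simp
  | succ k ih =>
    rcases lt_or_ge n (k + 1) with h | h
    · rw [Nat.descFactorial_eq_zero_iff_lt.2 h, Finset.prod_eq_zero
        (Finset.mem_range.2 h) (by simp)]
      simp
    · rw [Nat.descFactorial_succ, Nat.cast_mul, Nat.cast_sub (by omega : k ≤ n), ih,
        Finset.prod_range_succ]
      ring

lemma hasSum_desc (lam : ℝ) (k : ℕ) :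
    HasSum (fun n : ℕ => (n.descFactorial k : ℝ) * lam ^ n / n.factorial)
      (lam ^ k * Real.exp lam) := by
  have he : HasSum (fun m : ℕ => lam ^ m / m.factorial) (Real.exp lam) := by
    have h := NormedSpace.expSeries_div_hasSum_exp lam
    rwa [Real.exp_eq_exp_ℝ]
  have key : HasSum (fun m : ℕ =>
      (((m + k).descFactorial k : ℝ)) * lam ^ (m + k) / (m + k).factorial)
      (lam ^ k * Real.exp lam) := by
    have h2 := he.mul_left (lam ^ k)
    convert h2 using 1
    · rfl
    funext m
    have h1n : m.factorial * (m + k).descFactorial k = (m + k).factorial := by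
      simpa using Nat.factorial_mul_descFactorial (Nat.le_add_left k m)
    have h1 : ((m + k).factorial : ℝ) = (m.factorial : ℝ) * ((m + k).descFactorial k : ℝ) := by
      exact_mod_cast h1n.symm
    have hd0 : ((m + k).descFactorial k : ℝ) ≠ 0 := by
      have : (m + k).descFactorial k ≠ 0 := by
        rw [Ne, Nat.descFactorial_eq_zero_iff_lt]; omega
      exact_mod_cast this
    have hm0 : (m.factorial : ℝ) ≠ 0 := by exact_mod_cast m.factorial_ne_zero
    rw [h1, pow_add]
    field_simp
  have h3 := (hasSum_nat_add_iff
    (f := fun n : ℕ => (n.descFactorial k : ℝ) * lam ^ n / n.factorial) k).1 key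
  have hz : ∑ i ∈ Finset.range k,
      ((i.descFactorial k : ℝ) * lam ^ i / i.factorial) = 0 :=
    Finset.sum_eq_zero fun i hi => by
      simp [Nat.descFactorial_eq_zero_iff_lt.2 (Finset.mem_range.1 hi)]
  rw [hz, add_zero] at h3
  exact h3

lemma hasSum_mom0 (lam : ℝ) :
    HasSum (fun n : ℕ => (n : ℝ) ^ 0 * lam ^ n / n.factorial)
      ((1) * Real.exp lam) := by
  simpa using hasSum_desc lam 0

lemma hasSum_mom1 (lam : ℝ) :
    HasSum (fun n : ℕ => (n : ℝ) ^ 1 * lam ^ n / n.factorial)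
      ((lam) * Real.exp lam) := by
  have h := (hasSum_desc lam 1)
  convert h using 1
  · funext n
    simp only [descCast, Finset.prod_range_succ, Finset.prod_range_zero]
    push_cast
    ring
  · ring

lemma hasSum_mom2 (lam : ℝ) :
    HasSum (fun n : ℕ => (n : ℝ) ^ 2 * lam ^ n / n.factorial)
      ((lam ^ 2 + lam) * Real.exp lam) := by
  have h := ((hasSum_desc lam 2).add (hasSum_desc lam 1))
  convert h using 1
  · funext n
    simp only [descCast, Finset.prod_range_succ, Finset.prod_range_zero]
    push_cast
    ring
  · ring

lemma hasSum_mom3 (lam : ℝ) :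
    HasSum (fun n : ℕ => (n : ℝ) ^ 3 * lam ^ n / n.factorial)
      ((lam ^ 3 + 3 * lam ^ 2 + lam) * Real.exp lam) := by
  have h := (((hasSum_desc lam 3).add ((hasSum_desc lam 2).mul_left 3)).add (hasSum_desc lam 1))
  convert h using 1
  · funext n
    simp only [descCast, Finset.prod_range_succ, Finset.prod_range_zero]
    push_cast
    ring
  · ring

lemma hasSum_mom4 (lam : ℝ) :
    HasSum (fun n : ℕ => (n : ℝ) ^ 4 * lam ^ n / n.factorial)
      ((lam ^ 4 + 6 * lam ^ 3 + 7 * lam ^ 2 + lam) * Real.exp lam) := by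
  have h := ((((hasSum_desc lam 4).add ((hasSum_desc lam 3).mul_left 6)).add ((hasSum_desc lam 2).mul_left 7)).add (hasSum_desc lam 1))
  convert h using 1
  · funext n
    simp only [descCast, Finset.prod_range_succ, Finset.prod_range_zero]
    push_cast
    ring
  · ring

lemma hasSum_mom5 (lam : ℝ) :
    HasSum (fun n : ℕ => (n : ℝ) ^ 5 * lam ^ n / n.factorial)
      ((lam ^ 5 + 10 * lam ^ 4 + 25 * lam ^ 3 + 15 * lam ^ 2 + lam) * Real.exp lam) := by
  have h := (((((hasSum_desc lam 5).add ((hasSum_desc lam 4).mul_left 10)).add ((hasSum_desc lam 3).mul_left 25)).add ((hasSum_desc lam 2).mul_left 15)).add (hasSum_desc lam 1))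
  convert h using 1
  · funext n
    simp only [descCast, Finset.prod_range_succ, Finset.prod_range_zero]
    push_cast
    ring
  · ring

lemma hasSum_mom6 (lam : ℝ) :
    HasSum (fun n : ℕ => (n : ℝ) ^ 6 * lam ^ n / n.factorial)
      ((lam ^ 6 + 15 * lam ^ 5 + 65 * lam ^ 4 + 90 * lam ^ 3 + 31 * lam ^ 2 + lam) * Real.exp lam) := by
  have h := ((((((hasSum_desc lam 6).add ((hasSum_desc lam 5).mul_left 15)).add ((hasSum_desc lam 4).mul_left 65)).add ((hasSum_desc lam 3).mul_left 90)).add ((hasSum_desc lam 2).mul_left 31)).add (hasSum_desc lam 1))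
  convert h using 1
  · funext n
    simp only [descCast, Finset.prod_range_succ, Finset.prod_range_zero]
    push_cast
    ring
  · ring

def poisMom (lam : ℝ) (i : ℕ) : ℝ :=
  if i = 0 then (1) else if i = 1 then (lam) else if i = 2 then (lam ^ 2 + lam) else if i = 3 then (lam ^ 3 + 3 * lam ^ 2 + lam) else if i = 4 then (lam ^ 4 + 6 * lam ^ 3 + 7 * lam ^ 2 + lam) else if i = 5 then (lam ^ 5 + 10 * lam ^ 4 + 25 * lam ^ 3 + 15 * lam ^ 2 + lam) else if i = 6 then (lam ^ 6 + 15 * lam ^ 5 + 65 * lam ^ 4 + 90 * lam ^ 3 + 31 * lam ^ 2 + lam) else 0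

def cf1 (i j : ℕ) : ℝ :=
  if i = 0 ∧ j = 1 then (-1 : ℝ) else if i = 0 ∧ j = 2 then (1 : ℝ) else if i = 1 ∧ j = 0 then (-1 : ℝ) else if i = 1 ∧ j = 1 then (-2 : ℝ) else if i = 2 ∧ j = 0 then (1 : ℝ) else 0

def cf2 (i j : ℕ) : ℝ :=
  if i = 0 ∧ j = 2 then (1 : ℝ) else if i = 0 ∧ j = 3 then (-2 : ℝ) else if i = 0 ∧ j = 4 then (1 : ℝ) else if i = 1 ∧ j = 1 then (2 : ℝ) else if i = 1 ∧ j = 2 then (2 : ℝ) else if i = 1 ∧ j = 3 then (-4 : ℝ) else if i = 2 ∧ j = 0 then (1 : ℝ) else if i = 2 ∧ j = 1 then (2 : ℝ) else if i = 2 ∧ j = 2 then (6 : ℝ) else if i = 3 ∧ j = 0 then (-2 : ℝ) else if i = 3 ∧ j = 1 then (-4 : ℝ) else if i = 4 ∧ j = 0 then (1 : ℝ) else 0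

def cf3 (i j : ℕ) : ℝ :=
  if i = 0 ∧ j = 3 then (-1 : ℝ) else if i = 0 ∧ j = 4 then (3 : ℝ) else if i = 0 ∧ j = 5 then (-3 : ℝ) else if i = 0 ∧ j = 6 then (1 : ℝ) else if i = 1 ∧ j = 2 then (-3 : ℝ) else if i = 1 ∧ j = 4 then (9 : ℝ) else if i = 1 ∧ j = 5 then (-6 : ℝ) else if i = 2 ∧ j = 1 then (-3 : ℝ) else if i = 2 ∧ j = 2 then (-6 : ℝ) else if i = 2 ∧ j = 3 then (-6 : ℝ) else if i = 2 ∧ j = 4 then (15 : ℝ) else if i = 3 ∧ j = 0 then (-1 : ℝ) else if i = 3 ∧ j = 2 then (-6 : ℝ) else if i = 3 ∧ j = 3 then (-20 : ℝ) else if i = 4 ∧ j = 0 then (3 : ℝ) else if i = 4 ∧ j = 1 then (9 : ℝ) else if i = 4 ∧ j = 2 then (15 : ℝ) else if i = 5 ∧ j = 0 then (-3 : ℝ) else if i = 5 ∧ j = 1 then (-6 : ℝ) else if i = 6 ∧ j = 0 then (1 : ℝ) else 0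

lemma hasSum_poisMom (lam : ℝ) {i : ℕ} (hi : i < 7) :
    HasSum (fun n : ℕ => (n : ℝ) ^ i * lam ^ n / n.factorial)
      (poisMom lam i * Real.exp lam) := by
  interval_cases i
  · simpa [poisMom] using hasSum_mom0 lam
  · simpa [poisMom] using hasSum_mom1 lam
  · simpa [poisMom] using hasSum_mom2 lam
  · simpa [poisMom] using hasSum_mom3 lam
  · simpa [poisMom] using hasSum_mom4 lam
  · simpa [poisMom] using hasSum_mom5 lam
  · simpa [poisMom] using hasSum_mom6 lam

lemma integral_comp_nat {Ω : Type*} [MeasurableSpace Ω] (P : Measure Ω)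
    (lam : ℝ) (hlam : 0 < lam) (L : Ω → ℕ) (hLm : Measurable L)
    (hL : ∀ n : ℕ, P {ω | L ω = n}
      = ENNReal.ofReal (Real.exp (-lam) * lam ^ n / n.factorial))
    (g : ℕ → ℝ) (hg0 : ∀ n, 0 ≤ g n) {S : ℝ}
    (hS : HasSum (fun n => g n * lam ^ n / n.factorial) S) :
    Integrable (fun ω => g (L ω)) P ∧ ∫ ω, g (L ω) ∂P = Real.exp (-lam) * S := by
  have hq : ∀ n : ℕ, 0 ≤ Real.exp (-lam) * lam ^ n / n.factorial := fun n => by positivity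
  have hSg : HasSum (fun n => g n * (Real.exp (-lam) * lam ^ n / n.factorial))
      (Real.exp (-lam) * S) := by
    have h := hS.mul_left (Real.exp (-lam))
    convert h using 1
    · rfl
    funext n
    ring
  have hmap : ∀ n : ℕ, (P.map L) {n}
      = ENNReal.ofReal (Real.exp (-lam) * lam ^ n / n.factorial) := by
    intro n
    rw [Measure.map_apply hLm (measurableSet_singleton n)]
    exact hL n
  have hgm : Measurable g := measurable_from_top
  have hint : Integrable g (P.map L) := by
    refine ⟨hgm.aestronglyMeasurable, ?_⟩
    have hcalc : (∫⁻ n, ‖g n‖ₑ ∂(P.map L)) = ENNReal.ofReal (Real.exp (-lam) * S) := by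
      rw [lintegral_countable']
      have h1 : ∀ n : ℕ, ‖g n‖ₑ * (P.map L) {n}
          = ENNReal.ofReal (g n * (Real.exp (-lam) * lam ^ n / n.factorial)) := fun n => by
        rw [hmap n, Real.enorm_eq_ofReal (hg0 n), ← ENNReal.ofReal_mul (hg0 n)]
      rw [tsum_congr h1, ← ENNReal.ofReal_tsum_of_nonneg
        (fun n => mul_nonneg (hg0 n) (hq n)) hSg.summable, hSg.tsum_eq]
    rw [hasFiniteIntegral_iff_enorm, hcalc]
    exact ENNReal.ofReal_lt_top
  have hintc : Integrable (fun ω => g (L ω)) P :=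
    (integrable_map_measure hgm.aestronglyMeasurable hLm.aemeasurable).mp hint
  refine ⟨hintc, ?_⟩
  calc ∫ ω, g (L ω) ∂P = ∫ n, g n ∂(P.map L) :=
        (integral_map hLm.aemeasurable hgm.aestronglyMeasurable).symm
    _ = ∑' n, ((P.map L) {n}).toReal • g n := integral_countable' hint
    _ = ∑' n, g n * (Real.exp (-lam) * lam ^ n / n.factorial) :=
        tsum_congr fun n => by
          rw [hmap n, ENNReal.toReal_ofReal (hq n), smul_eq_mul, mul_comm]
    _ = Real.exp (-lam) * S := hSg.tsum_eq

lemma expand1 (x y : ℝ) :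
    x * (x - 1) + y * (y - 1) - 2 * x * y
      = ∑ p ∈ Finset.range 7 ×ˢ Finset.range 7, cf1 p.1 p.2 * (x ^ p.1 * y ^ p.2) := by
  simp only [Finset.sum_product, Finset.sum_range_succ, Finset.sum_range_zero, cf1]
  norm_num
  ring

lemma expand2 (x y : ℝ) :
    (x * (x - 1) + y * (y - 1) - 2 * x * y) ^ 2
      = ∑ p ∈ Finset.range 7 ×ˢ Finset.range 7, cf2 p.1 p.2 * (x ^ p.1 * y ^ p.2) := by
  simp only [Finset.sum_product, Finset.sum_range_succ, Finset.sum_range_zero, cf2]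
  norm_num
  ring

lemma expand3 (x y : ℝ) :
    (x * (x - 1) + y * (y - 1) - 2 * x * y) ^ 3
      = ∑ p ∈ Finset.range 7 ×ˢ Finset.range 7, cf3 p.1 p.2 * (x ^ p.1 * y ^ p.2) := by
  simp only [Finset.sum_product, Finset.sum_range_succ, Finset.sum_range_zero, cf3]
  norm_num
  ring

/-- **Constant skewness of `F = L(L−1) + R(R−1) − 2LR`** for `L, R` independent
Poisson(λ): the normalized third moment
`E[((F − E F)/√(Var F))³] = 64λ³/(8λ²)^{3/2} = 2√2` for every `λ > 0`, so it does not
tend to `0`; in particular the normalized `F` cannot converge to a standard Gaussian. -/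
theorem skewness_poisson_quadratic {Ω : Type*} [MeasurableSpace Ω]
    (P : Measure Ω) [IsProbabilityMeasure P] (lam : ℝ) (hlam : 0 < lam)
    (L R : Ω → ℕ) (hLm : Measurable L) (hRm : Measurable R)
    (hL : ∀ n : ℕ, P {ω | L ω = n}
      = ENNReal.ofReal (Real.exp (-lam) * lam ^ n / n.factorial))
    (hR : ∀ n : ℕ, P {ω | R ω = n}
      = ENNReal.ofReal (Real.exp (-lam) * lam ^ n / n.factorial))
    (hind : IndepFun L R P)
    (F : Ω → ℝ)
    (hF : F = fun ω => (L ω : ℝ) * ((L ω : ℝ) - 1) + (R ω : ℝ) * ((R ω : ℝ) - 1)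
      - 2 * (L ω : ℝ) * (R ω : ℝ)) :
    ∫ ω, ((F ω - ∫ ω', F ω' ∂P) / Real.sqrt (variance F P)) ^ 3 ∂P
      = 64 * lam ^ 3 / (8 * lam ^ 2) ^ ((3 : ℝ) / 2) ∧
    64 * lam ^ 3 / (8 * lam ^ 2) ^ ((3 : ℝ) / 2) = 2 * Real.sqrt 2 := by
  -- single moments
  have hmomL : ∀ i : ℕ, i < 7 → Integrable (fun ω => (L ω : ℝ) ^ i) P ∧
      ∫ ω, (L ω : ℝ) ^ i ∂P = poisMom lam i := by
    intro i hi
    have h := integral_comp_nat P lam hlam L hLm hL (fun n => (n : ℝ) ^ i)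
      (fun n => by positivity) (hasSum_poisMom lam hi)
    refine ⟨h.1, ?_⟩
    rw [h.2, show Real.exp (-lam) * (poisMom lam i * Real.exp lam)
      = poisMom lam i * (Real.exp (-lam) * Real.exp lam) from by ring,
      ← Real.exp_add, neg_add_cancel, Real.exp_zero, mul_one]
  have hmomR : ∀ i : ℕ, i < 7 → Integrable (fun ω => (R ω : ℝ) ^ i) P ∧
      ∫ ω, (R ω : ℝ) ^ i ∂P = poisMom lam i := by
    intro i hi
    have h := integral_comp_nat P lam hlam R hRm hR (fun n => (n : ℝ) ^ i)
      (fun n => by positivity) (hasSum_poisMom lam hi)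
    refine ⟨h.1, ?_⟩
    rw [h.2, show Real.exp (-lam) * (poisMom lam i * Real.exp lam)
      = poisMom lam i * (Real.exp (-lam) * Real.exp lam) from by ring,
      ← Real.exp_add, neg_add_cancel, Real.exp_zero, mul_one]
  -- mixed moments
  have hmix : ∀ p ∈ Finset.range 7 ×ˢ Finset.range 7,
      Integrable (fun ω => (L ω : ℝ) ^ p.1 * (R ω : ℝ) ^ p.2) P ∧
      ∫ ω, (L ω : ℝ) ^ p.1 * (R ω : ℝ) ^ p.2 ∂P = poisMom lam p.1 * poisMom lam p.2 := by
    intro p hp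
    obtain ⟨hp1, hp2⟩ := Finset.mem_product.1 hp
    have hiL := hmomL p.1 (Finset.mem_range.1 hp1)
    have hiR := hmomR p.2 (Finset.mem_range.1 hp2)
    have hind' : IndepFun (fun ω => (L ω : ℝ) ^ p.1) (fun ω => (R ω : ℝ) ^ p.2) P :=
      hind.comp (φ := fun n : ℕ => (n : ℝ) ^ p.1) (ψ := fun n : ℕ => (n : ℝ) ^ p.2)
        measurable_from_top measurable_from_top
    constructor
    · exact hind'.integrable_mul hiL.1 hiR.1
    · have h := hind'.integral_fun_mul_eq_mul_integral hiL.1.aestronglyMeasurable hiR.1.aestronglyMeasurable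
      rw [← hiL.2, ← hiR.2, ← h]
  have hintegrable : ∀ (c : ℕ → ℕ → ℝ), ∀ p ∈ Finset.range 7 ×ˢ Finset.range 7,
      Integrable (fun ω => c p.1 p.2 * ((L ω : ℝ) ^ p.1 * (R ω : ℝ) ^ p.2)) P :=
    fun c p hp => ((hmix p hp).1).const_mul _
  have hsumint : ∀ (c : ℕ → ℕ → ℝ),
      ∫ ω, ∑ p ∈ Finset.range 7 ×ˢ Finset.range 7,
          c p.1 p.2 * ((L ω : ℝ) ^ p.1 * (R ω : ℝ) ^ p.2) ∂P
        = ∑ p ∈ Finset.range 7 ×ˢ Finset.range 7,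
          c p.1 p.2 * (poisMom lam p.1 * poisMom lam p.2) := by
    intro c
    rw [integral_finset_sum _ (hintegrable c)]
    exact Finset.sum_congr rfl fun p hp => by
      rw [integral_const_mul, (hmix p hp).2]
  -- expansions of F, F², F³
  have e1 : F = fun ω => ∑ p ∈ Finset.range 7 ×ˢ Finset.range 7,
      cf1 p.1 p.2 * ((L ω : ℝ) ^ p.1 * (R ω : ℝ) ^ p.2) := by
    funext ω; rw [hF]; exact expand1 _ _
  have e2 : (fun ω => F ω ^ 2) = fun ω => ∑ p ∈ Finset.range 7 ×ˢ Finset.range 7,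
      cf2 p.1 p.2 * ((L ω : ℝ) ^ p.1 * (R ω : ℝ) ^ p.2) := by
    funext ω; rw [hF]; exact expand2 _ _
  have e3 : (fun ω => F ω ^ 3) = fun ω => ∑ p ∈ Finset.range 7 ×ˢ Finset.range 7,
      cf3 p.1 p.2 * ((L ω : ℝ) ^ p.1 * (R ω : ℝ) ^ p.2) := by
    funext ω; rw [hF]; exact expand3 _ _
  -- values of the three integrals
  have hIF : ∫ ω, F ω ∂P = 0 := by
    rw [show (fun ω => F ω) = F from rfl] -- no-op
    rw [e1, hsumint cf1]
    simp only [Finset.sum_product, Finset.sum_range_succ, Finset.sum_range_zero, cf1, poisMom]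
    norm_num
    ring
  have hIF2 : ∫ ω, F ω ^ 2 ∂P = 8 * lam ^ 2 := by
    rw [show (fun ω => F ω ^ 2) = fun ω => F ω ^ 2 from rfl, e2, hsumint cf2]
    simp only [Finset.sum_product, Finset.sum_range_succ, Finset.sum_range_zero, cf2, poisMom]
    norm_num
    ring
  have hIF3 : ∫ ω, F ω ^ 3 ∂P = 64 * lam ^ 3 := by
    rw [show (fun ω => F ω ^ 3) = fun ω => F ω ^ 3 from rfl, e3, hsumint cf3]
    simp only [Finset.sum_product, Finset.sum_range_succ, Finset.sum_range_zero, cf3, poisMom]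
    norm_num
    ring
  -- measurability and variance
  have mL : Measurable fun ω => (L ω : ℝ) := measurable_from_top.comp hLm
  have mR : Measurable fun ω => (R ω : ℝ) := measurable_from_top.comp hRm
  have hFmeas : AEStronglyMeasurable F P := by
    rw [hF]
    exact (((mL.mul (mL.sub measurable_const)).add
      (mR.mul (mR.sub measurable_const))).sub
      ((measurable_const.mul mL).mul mR)).aestronglyMeasurable
  have hIntF2 : Integrable (fun ω => F ω ^ 2) P := by
    rw [e2]; exact integrable_finset_sum _ (hintegrable cf2)
  have hmem : MemLp F 2 P := (memLp_two_iff_integrable_sq hFmeas).mpr hIntF2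
  have hvar : variance F P = 8 * lam ^ 2 := by
    rw [variance_eq_sub hmem]
    simp only [Pi.pow_apply]
    rw [hIF2, hIF]
    ring
  have h8 : (0 : ℝ) ≤ 8 * lam ^ 2 := by positivity
  have hsq : Real.sqrt (8 * lam ^ 2) ^ (3 : ℕ) = (8 * lam ^ 2) ^ ((3 : ℝ) / 2) := by
    rw [Real.sqrt_eq_rpow, ← Real.rpow_natCast ((8 * lam ^ 2) ^ ((1 : ℝ) / 2)) 3,
      ← Real.rpow_mul h8]
    norm_num
  constructor
  · calc ∫ ω, ((F ω - ∫ ω', F ω' ∂P) / Real.sqrt (variance F P)) ^ 3 ∂P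
        = ∫ ω, F ω ^ 3 / Real.sqrt (8 * lam ^ 2) ^ (3 : ℕ) ∂P := by
          simp only [hIF, hvar, sub_zero, div_pow]
      _ = (∫ ω, F ω ^ 3 ∂P) / Real.sqrt (8 * lam ^ 2) ^ (3 : ℕ) := integral_div _ _
      _ = 64 * lam ^ 3 / (8 * lam ^ 2) ^ ((3 : ℝ) / 2) := by rw [hIF3, hsq]
  · have hs2 : Real.sqrt 2 * Real.sqrt 2 = 2 := Real.mul_self_sqrt (by norm_num)
    have hsqrt : Real.sqrt (8 * lam ^ 2) = 2 * Real.sqrt 2 * lam := by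
      rw [show (8 : ℝ) * lam ^ 2 = (2 * Real.sqrt 2 * lam) ^ 2 from by
        linear_combination (-4 * lam ^ 2) * hs2,
        Real.sqrt_sq (by positivity)]
    rw [← hsq, hsqrt, div_eq_iff (by positivity)]
    linear_combination (-16 * lam ^ 3 * (Real.sqrt 2 * Real.sqrt 2 + 2)) * hs2
end
end

section
/- Let f(x₁,x₂) = 1(0 ≤ |x₁|√|x₂| ≤ 1)·1(0 ≤ |x₂|√|x₁| ≤ 1)·(2·1(x₁x₂ ≥ 0) − 1) on ℝ². Then the first chaos kernel f₁(y) = 2∫_ℝ f(y,x) dx is identically 0, while the first kernel of |f|, namely 2∫_ℝ |f(y,x)| dx, is not in L²(ℝ). -/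
open MeasureTheory Set

noncomputable section

/-- `f(x₁,x₂) = 1(0 ≤ |x₁|√|x₂| ≤ 1)·1(0 ≤ |x₂|√|x₁| ≤ 1)·(2·1(x₁x₂ ≥ 0) − 1)`. -/
def fsign : ℝ × ℝ → ℝ := fun p =>
  (if |p.1| * Real.sqrt |p.2| ≤ 1 ∧ |p.2| * Real.sqrt |p.1| ≤ 1 then 1 else 0)
    * (if 0 ≤ p.1 * p.2 then 1 else -1)

lemma fsign_neg_right {y x : ℝ} (hy : y ≠ 0) (hx : x ≠ 0) :
    fsign (y, -x) = - fsign (y, x) := by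
  have hyx : y * x ≠ 0 := mul_ne_zero hy hx
  simp only [fsign, abs_neg]
  rcases lt_or_gt_of_ne hyx with h | h
  · rw [if_pos (by nlinarith : (0:ℝ) ≤ y * -x), if_neg (not_le.2 h)]; ring
  · rw [if_neg (not_le.2 (by nlinarith : y * -x < 0)), if_pos h.le]; ring

lemma abs_fsign_eq {y : ℝ} (hy : 0 < y) (hy1 : y ≤ 1) (x : ℝ) :
    |fsign (y, x)| = (Icc (-(Real.sqrt y)⁻¹) (Real.sqrt y)⁻¹).indicator (fun _ => (1:ℝ)) x := by
  have hsy : 0 < Real.sqrt y := Real.sqrt_pos.2 hy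
  have hyy : y ≤ Real.sqrt y := by
    nlinarith [Real.sq_sqrt hy.le, Real.sqrt_nonneg y]
  have hcond : (|y| * Real.sqrt |x| ≤ 1 ∧ |x| * Real.sqrt |y| ≤ 1) ↔ |x| ≤ (Real.sqrt y)⁻¹ := by
    rw [abs_of_pos hy]
    constructor
    · rintro ⟨-, h2⟩
      calc |x| = |x| * Real.sqrt y * (Real.sqrt y)⁻¹ := by field_simp
        _ ≤ 1 * (Real.sqrt y)⁻¹ := by gcongr
        _ = (Real.sqrt y)⁻¹ := one_mul _
    · intro h
      have hinv : (Real.sqrt y)⁻¹ ≤ y⁻¹ := inv_anti₀ hy hyy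
      have hxy : |x| ≤ y⁻¹ := h.trans hinv
      refine ⟨?_, ?_⟩
      · have h1 : Real.sqrt |x| ≤ Real.sqrt y⁻¹ := Real.sqrt_le_sqrt hxy
        have h2 : Real.sqrt y⁻¹ ≤ y⁻¹ := by
          rw [Real.sqrt_inv]
          exact hinv
        calc y * Real.sqrt |x| ≤ y * y⁻¹ := by gcongr; linarith
          _ = 1 := mul_inv_cancel₀ hy.ne'
      · calc |x| * Real.sqrt y ≤ (Real.sqrt y)⁻¹ * Real.sqrt y := by gcongr
          _ = 1 := inv_mul_cancel₀ hsy.ne'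
  by_cases hmem : |x| ≤ (Real.sqrt y)⁻¹
  · rw [indicator_of_mem (mem_Icc.2 ⟨(abs_le.1 hmem).1, (abs_le.1 hmem).2⟩)]
    simp only [fsign]
    rw [if_pos (hcond.2 hmem)]
    rcases le_or_gt 0 (y * x) with h | h
    · rw [if_pos h]; norm_num
    · rw [if_neg h.not_ge]; norm_num
  · rw [indicator_of_notMem (fun hm => hmem (abs_le.2 ⟨hm.1, hm.2⟩))]
    simp only [fsign]
    rw [if_neg (fun hc => hmem (hcond.1 hc))]
    simp

/-- **A square-integrable U-statistic that is not absolutely convergent.** The first chaos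
kernel `f₁(y) = 2∫ f(y,x) dx` vanishes identically (for `y ≠ 0`), while the first kernel
of `|f|`, namely `y ↦ 2∫ |f(y,x)| dx`, is not in `L²(ℝ)`. -/
theorem fsign_first_kernel_zero_but_abs_not_L2 :
    (∀ y : ℝ, y ≠ 0 → 2 * ∫ x, fsign (y, x) = 0) ∧
    ¬ MemLp (fun y => 2 * ∫ x, |fsign (y, x)|) 2 (volume : Measure ℝ) := by
  constructor
  · intro y hy
    have h0 : ∀ᵐ x : ℝ, x ≠ 0 := by
      rw [ae_iff]
      simp [Set.setOf_eq_eq_singleton']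
    have h1 : ∫ x, fsign (y, -x) = ∫ x, fsign (y, x) :=
      integral_neg_eq_self (fun x => fsign (y, x)) volume
    have h2 : ∫ x, fsign (y, -x) = ∫ x, -fsign (y, x) :=
      integral_congr_ae (h0.mono fun x hx => fsign_neg_right hy hx)
    rw [integral_neg] at h2
    have : ∫ x, fsign (y, x) = 0 := by linarith [h1, h2]
    rw [this]; ring
  · intro hmem
    have hsq : Integrable (fun y : ℝ => (2 * ∫ x, |fsign (y, x)|) ^ 2) volume :=
      hmem.integrable_sq
    have hres : IntegrableOn (fun y : ℝ => (2 * ∫ x, |fsign (y, x)|) ^ 2) (Ioc 0 1) volume :=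
      hsq.integrableOn
    have heq : EqOn (fun y : ℝ => (2 * ∫ x, |fsign (y, x)|) ^ 2)
        (fun y : ℝ => 16 * y⁻¹) (Ioc 0 1) := by
      intro y hy
      have hsy : 0 < Real.sqrt y := Real.sqrt_pos.2 hy.1
      have hint : ∫ x, |fsign (y, x)| = 2 * (Real.sqrt y)⁻¹ := by
        simp_rw [abs_fsign_eq hy.1 hy.2]
        rw [integral_indicator measurableSet_Icc, setIntegral_const, measureReal_def, Real.volume_Icc,
          smul_eq_mul, mul_one, ENNReal.toReal_ofReal (by linarith [inv_nonneg.2 hsy.le])]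
        ring
      simp only
      rw [hint, show (2 * (2 * (Real.sqrt y)⁻¹)) ^ 2 = 16 * ((Real.sqrt y) ^ 2)⁻¹ by ring,
        Real.sq_sqrt hy.1.le]
    have hres2 : IntegrableOn (fun y : ℝ => 16 * y⁻¹) (Ioc 0 1) volume :=
      hres.congr_fun heq measurableSet_Ioc
    have hinv : IntegrableOn (fun y : ℝ => y⁻¹) (Ioc 0 1) volume := by
      have h : IntegrableOn (fun y : ℝ => 16⁻¹ * (16 * y⁻¹)) (Ioc 0 1) volume :=
        hres2.const_mul (16⁻¹ : ℝ)
      refine h.congr_fun (fun y _ => ?_) measurableSet_Ioc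
      show (16:ℝ)⁻¹ * (16 * y⁻¹) = y⁻¹
      ring
    have hii : IntervalIntegrable (fun x : ℝ => x⁻¹) volume 0 1 :=
      (intervalIntegrable_iff_integrableOn_Ioc_of_le (by norm_num)).2 hinv
    rw [intervalIntegrable_inv_iff] at hii
    rcases hii with h | h
    · norm_num at h
    · exact h (by simp)
end
end
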